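/- Let P be a convex polytope in R^d, v a vertex of P, u ∈ P a point farthest from v, and w ∈ P a point farthest from u. Let x be the point on the ray from u through v at distance dist(u,w)/2 from u. If p, q ∈ P satisfy dist(p,q) = diam(P) and angle(p, x, q) = θ, then dist(u,w) ≥ min{ diam(P), diam(P)/(√3·sin(θ/2)) }. -/

import Mathlib

open Real Metric EuclideanGeometry

lemma dist_ray_le {d : ℕ} {v u x a : EuclideanSpace ℝ (Fin d)} {t r : ℝ}
    (ht0 : 0 ≤ t) (hx : x = u + t • (v - u))
    (h1 : dist v a ≤ dist v u) (h2 : dist u a ≤ 2 * r)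
    (h3 : dist u v ≤ 2 * r) (htr : t * ‖v - u‖ = r) :
    dist x a ^ 2 ≤ 3 * r ^ 2 := by
  set N : ℝ := ‖u - a‖ with hN
  set s : ℝ := ‖v - u‖ with hs
  set I : ℝ := inner ℝ (u - a) (v - u) with hI
  have hxa : dist x a ^ 2 = N ^ 2 + 2 * (t * I) + t ^ 2 * s ^ 2 := by
    have : x - a = (u - a) + t • (v - u) := by rw [hx]; abel
    rw [dist_eq_norm, this, @norm_add_sq_real]
    rw [real_inner_smul_right, norm_smul, Real.norm_eq_abs, abs_of_nonneg ht0]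
    ring
  have h1' : 2 * I + N ^ 2 ≤ 0 := by
    have hva : v - a = (v - u) + (u - a) := by abel
    have := h1
    rw [dist_eq_norm, dist_eq_norm, hva] at this
    have hsq : ‖(v - u) + (u - a)‖ ^ 2 ≤ ‖v - u‖ ^ 2 := by
      apply pow_le_pow_left₀ (norm_nonneg _) this
    rw [@norm_add_sq_real, real_inner_comm] at hsq
    nlinarith
  have hNr : N ≤ 2 * r := by rw [hN, ← dist_eq_norm]; exact h2
  have hsr : s ≤ 2 * r := by rw [hs, ← dist_eq_norm, dist_comm]; exact h3
  have hN0 : 0 ≤ N := norm_nonneg _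
  have hs0 : 0 ≤ s := norm_nonneg _
  have hr0 : 0 ≤ r := by rw [← htr]; positivity
  rw [hxa]
  have ht2 : t ^ 2 * s ^ 2 = r ^ 2 := by rw [← htr]; ring
  have hrts : r * (t * s) = r * r := by rw [htr]
  rcases le_or_gt t 1 with ht1 | ht1
  · nlinarith [mul_nonneg ht0 (by linarith : (0:ℝ) ≤ -(2*I) - N^2),
      mul_nonneg (mul_nonneg (by linarith : (0:ℝ) ≤ 1 - t) (by linarith : (0:ℝ) ≤ 2*r - N)) (by linarith : (0:ℝ) ≤ 2*r + N),
      mul_nonneg (mul_nonneg hr0 ht0) (by linarith : (0:ℝ) ≤ 2*r - s)]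
  · nlinarith [mul_nonneg ht0 (by linarith : (0:ℝ) ≤ -(2*I) - N^2),
      mul_nonneg (by linarith : (0:ℝ) ≤ t - 1) (sq_nonneg N)]

set_option maxHeartbeats 1000000 in
theorem stmt_3 {d : ℕ} (P : Set (EuclideanSpace ℝ (Fin d)))
    (hPc : IsCompact P) (hPconv : Convex ℝ P)
    (v u w x p q : EuclideanSpace ℝ (Fin d)) (θ : ℝ)
    (hv : v ∈ Set.extremePoints ℝ P)
    (hu : u ∈ P) (hufar : ∀ a ∈ P, dist v a ≤ dist v u)
    (hw : w ∈ P) (hwfar : ∀ a ∈ P, dist u a ≤ dist u w)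
    (hray : ∃ t : ℝ, 0 ≤ t ∧ x = u + t • (v - u))
    (hxdist : dist u x = dist u w / 2)
    (hp : p ∈ P) (hq : q ∈ P) (hpq : dist p q = Metric.diam P)
    (hangle : ∠ p x q = θ) :
    min (Metric.diam P) (Metric.diam P / (Real.sqrt 3 * Real.sin (θ / 2))) ≤ dist u w := by
  rcases le_or_gt (Metric.diam P) (dist u w) with hd | hd
  · exact le_trans (min_le_left _ _) hd
  -- now diam P > dist u w ≥ 0
  obtain ⟨t, ht0, hx⟩ := hray
  have hvP : v ∈ P := hv.1
  set D : ℝ := Metric.diam P with hD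
  set r : ℝ := dist u w / 2 with hr
  have hD0 : 0 < D := lt_of_le_of_lt dist_nonneg hd
  -- D ≤ 2 * dist u w, so dist u w > 0
  have hD2 : D ≤ 4 * r := by
    rw [← hpq]
    calc dist p q ≤ dist p u + dist u q := dist_triangle p u q
      _ ≤ dist u w + dist u w := by
          have h1 := hwfar p hp
          have h2 := hwfar q hq
          rw [dist_comm p u]
          linarith
      _ = 4 * r := by rw [hr]; ring
  have hr0 : 0 < r := by linarith
  -- t * ‖v - u‖ = r
  have htr : t * ‖v - u‖ = r := by
    have : dist u x = t * ‖v - u‖ := by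
      rw [hx, dist_eq_norm]
      have : u - (u + t • (v - u)) = -(t • (v - u)) := by abel
      rw [this, norm_neg, norm_smul, Real.norm_eq_abs, abs_of_nonneg ht0]
    rw [← this, hxdist, hr]
  have key : ∀ a ∈ P, dist x a ^ 2 ≤ 3 * r ^ 2 := by
    intro a ha
    refine dist_ray_le ht0 hx (hufar a ha) ?_ ?_ htr
    · have := hwfar a ha; rw [hr]; linarith
    · have := hwfar v hvP; rw [hr]; linarith
  have hxp := key p hp
  have hxq := key q hq
  set a : ℝ := dist p x with ha
  set b : ℝ := dist q x with hb
  have ha2 : a ^ 2 ≤ 3 * r ^ 2 := by rw [ha, dist_comm]; exact hxp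
  have hb2 : b ^ 2 ≤ 3 * r ^ 2 := by rw [hb, dist_comm]; exact hxq
  have ha0 : 0 ≤ a := dist_nonneg
  have hb0 : 0 ≤ b := dist_nonneg
  have hlaw : D ^ 2 = a ^ 2 + b ^ 2 - 2 * a * b * Real.cos θ := by
    have h := EuclideanGeometry.law_cos p x q
    rw [hangle] at h
    rw [← hpq]
    linear_combination h
  have hθ0 : 0 ≤ θ := hangle ▸ EuclideanGeometry.angle_nonneg p x q
  have hθπ : θ ≤ π := hangle ▸ EuclideanGeometry.angle_le_pi p x q
  have hc1 : Real.cos θ ≤ 1 := Real.cos_le_one θ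
  have hc1' : -1 ≤ Real.cos θ := Real.neg_one_le_cos θ
  have hDr : 2 * r < D := by rw [hr] at *; linarith
  -- a * b > 0
  have hab : 0 < a * b := by
    rcases lt_or_eq_of_le ha0 with ha0' | ha0'
    · rcases lt_or_eq_of_le hb0 with hb0' | hb0'
      · positivity
      · exfalso
        have hDa : D ^ 2 = a ^ 2 := by rw [hlaw, ← hb0']; ring
        nlinarith [mul_pos (show (0:ℝ) < D - 2*r by linarith) (show (0:ℝ) < D + 2*r by linarith), mul_pos hr0 hr0]
    · exfalso
      have hDb : D ^ 2 = b ^ 2 := by rw [hlaw, ← ha0']; ring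
      nlinarith [mul_pos (show (0:ℝ) < D - 2*r by linarith) (show (0:ℝ) < D + 2*r by linarith), mul_pos hr0 hr0]
  -- main inequality: D^2 ≤ 2 * (3r^2) * (1 - cos θ)
  have hmain : D ^ 2 ≤ 6 * r ^ 2 * (1 - Real.cos θ) := by
    have hRab : a * b ≤ 3 * r ^ 2 := by nlinarith [sq_nonneg (a - b)]
    have hDR : 3 * r ^ 2 ≤ D ^ 2 := by nlinarith [mul_pos (show (0:ℝ) < D - 2*r by linarith) (show (0:ℝ) < D + 2*r by linarith), mul_pos hr0 hr0]
    have h5 : a * b * (6 * r ^ 2 * (1 - Real.cos θ) - D ^ 2)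
        = D ^ 2 * (3 * r ^ 2 - a * b) - 3 * r ^ 2 * (a - b) ^ 2 := by
      linear_combination (-3 * r ^ 2) * hlaw
    have hmix : 0 ≤ 3 * r ^ 2 - a ^ 2 - b ^ 2 + a * b := by
      rcases le_total b a with h' | h'
      · nlinarith [mul_nonneg hb0 (by linarith : (0:ℝ) ≤ a - b)]
      · nlinarith [mul_nonneg ha0 (by linarith : (0:ℝ) ≤ b - a)]
    have h6 : 0 ≤ a * b * (6 * r ^ 2 * (1 - Real.cos θ) - D ^ 2) := by
      rw [h5]
      nlinarith [mul_nonneg (by linarith : (0:ℝ) ≤ D ^ 2 - 3 * r ^ 2) (by linarith : (0:ℝ) ≤ 3 * r ^ 2 - a * b)]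
    nlinarith [h6, hab]
  -- convert to sin
  have hsin : D ^ 2 ≤ 12 * r ^ 2 * Real.sin (θ / 2) ^ 2 := by
    have := Real.sin_sq_eq_half_sub (θ / 2)
    have h2 : 2 * (θ / 2) = θ := by ring
    rw [h2] at this
    nlinarith [hmain]
  have hs0 : 0 ≤ Real.sin (θ / 2) := Real.sin_nonneg_of_nonneg_of_le_pi (by linarith) (by linarith [Real.pi_pos])
  have hsp : 0 < Real.sin (θ / 2) := by
    rcases lt_or_eq_of_le hs0 with h | h
    · exact h
    · exfalso
      have h2 : 12 * r ^ 2 * Real.sin (θ / 2) ^ 2 = 0 := by rw [← h]; ring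
      nlinarith [hsin, h2, mul_pos hD0 hD0]
  have hK : D ≤ Real.sqrt 3 * Real.sin (θ / 2) * dist u w := by
    have h3 : (Real.sqrt 3) ^ 2 = 3 := Real.sq_sqrt (by norm_num)
    have hK0 : 0 ≤ Real.sqrt 3 * Real.sin (θ / 2) * dist u w := by positivity
    have hsq : D ^ 2 ≤ (Real.sqrt 3 * Real.sin (θ / 2) * dist u w) ^ 2 := by
      have huw : dist u w = 2 * r := by rw [hr]; ring
      have hexp : (Real.sqrt 3 * Real.sin (θ / 2) * (2 * r)) ^ 2
          = 12 * r ^ 2 * Real.sin (θ / 2) ^ 2 := by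
        linear_combination (4 * r ^ 2 * Real.sin (θ / 2) ^ 2) * h3
      rw [huw, hexp]
      exact hsin
    exact (pow_le_pow_iff_left₀ hD0.le hK0 two_ne_zero).mp hsq
  refine le_trans (min_le_right _ _) ?_
  rw [div_le_iff₀ (by positivity)]
  linarith [hK]
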